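/- arXiv:1610.09711 — 3 statements merged into one kernel-verified Lean document; each statement's English description precedes it below -/
import Mathlib

section
/- Let K be an algebraically closed field, let n and m be natural numbers, and let M : Fin m → Matrix (Fin n) (Fin n) K be a family of matrices that pairwise commute. Then there exists a function μ : Fin n → Fin m → K (a simultaneous enumeration of eigenvalues) such that: (1) for every i : Fin m, the multiset of roots of the characteristic polynomial of M i equals the multiset {μ k i : k ∈ Fin n} (with multiplicity), and (2) the multiset of roots of the characteristic polynomial of the product ∏ i, M i (taken in the order of Fin m) equals the multiset {∏ i, μ k i : k ∈ Fin n} (with multiplicity). In particular, every eigenvalue of the product of pairwise commuting matrices is a product of eigenvalues of the factors, matched consistently. -/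
open Polynomial

section Aux

variable {K : Type*} [Field K]

open Matrix

/-- The charmatrix of a submatrix along `Fin.succ`. -/
private lemma charmatrix_submatrix_succ {n : ℕ} (A : Matrix (Fin (n + 1)) (Fin (n + 1)) K) :
    (charmatrix A).submatrix Fin.succ Fin.succ
      = charmatrix (A.submatrix Fin.succ Fin.succ) := by
  ext i j
  by_cases h : i = j
  · subst h
    simp [charmatrix_apply_eq]
  · rw [Matrix.submatrix_apply, charmatrix_apply_ne _ _ _ (by simpa [Fin.succ_inj] using h),
      charmatrix_apply_ne _ _ _ h, Matrix.submatrix_apply]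

/-- Characteristic polynomial of a matrix whose first column vanishes below the diagonal. -/
private lemma charpoly_succ_col {n : ℕ} (A : Matrix (Fin (n + 1)) (Fin (n + 1)) K)
    (hA : ∀ k : Fin n, A k.succ 0 = 0) :
    A.charpoly = (X - C (A 0 0)) * (A.submatrix Fin.succ Fin.succ).charpoly := by
  rw [Matrix.charpoly, Matrix.det_succ_column_zero]
  rw [Finset.sum_eq_single 0]
  · rw [charmatrix_apply_eq, Fin.succAbove_zero, charmatrix_submatrix_succ]
    simp [Matrix.charpoly]
  · intro i _ hi
    obtain ⟨k, rfl⟩ := Fin.exists_succ_eq.mpr hi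
    rw [charmatrix_apply_ne _ _ _ (Fin.succ_ne_zero k), hA k]
    simp
  · simp

/-- Products of matrices whose first column vanishes below the diagonal. -/
private lemma mul_succ_col {n : ℕ} {A B : Matrix (Fin (n + 1)) (Fin (n + 1)) K}
    (hA : ∀ k : Fin n, A k.succ 0 = 0) (hB : ∀ k : Fin n, B k.succ 0 = 0) :
    (∀ k : Fin n, (A * B) k.succ 0 = 0) ∧ (A * B) 0 0 = A 0 0 * B 0 0 ∧
      (A * B).submatrix Fin.succ Fin.succ
        = A.submatrix Fin.succ Fin.succ * B.submatrix Fin.succ Fin.succ := by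
  refine ⟨fun k => ?_, ?_, ?_⟩
  · rw [Matrix.mul_apply, Fin.sum_univ_succ, hA k]
    simp [hB]
  · rw [Matrix.mul_apply, Fin.sum_univ_succ]
    simp [hB]
  · ext k l
    simp [Matrix.mul_apply, Fin.sum_univ_succ, hA k]

private lemma list_prod_succ_col {n : ℕ} (L : List (Matrix (Fin (n + 1)) (Fin (n + 1)) K))
    (h : ∀ A ∈ L, ∀ k : Fin n, A k.succ 0 = 0) :
    (∀ k : Fin n, L.prod k.succ 0 = 0) ∧
      L.prod 0 0 = (L.map (fun A => A 0 0)).prod ∧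
      L.prod.submatrix Fin.succ Fin.succ
        = (L.map (fun A => A.submatrix Fin.succ Fin.succ)).prod := by
  induction L with
  | nil =>
    refine ⟨fun k => ?_, by simp [Matrix.one_apply], ?_⟩
    · simp [List.prod_nil, Matrix.one_apply, Fin.succ_ne_zero k]
    · simp only [List.prod_nil, List.map_nil]
      ext i j
      simp [Matrix.one_apply, Fin.succ_inj]
  | cons A L ih =>
    have hA := h A List.mem_cons_self
    have hL := ih (fun B hB => h B (List.mem_cons_of_mem _ hB))
    have key := mul_succ_col hA hL.1
    refine ⟨by simpa [List.prod_cons] using key.1, ?_, ?_⟩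
    · rw [List.prod_cons, key.2.1, hL.2.1, List.map_cons, List.prod_cons]
    · rw [List.prod_cons, key.2.2, hL.2.2, List.map_cons, List.prod_cons]

/-- A commuting family of endomorphisms of a nontrivial finite-dimensional vector space
over an algebraically closed field has a common eigenvector. -/
private lemma exists_common_eigenvector [IsAlgClosed K] :
    ∀ (m : ℕ) (V : Type _) (_ : AddCommGroup V), ∀ (_ : Module K V),
      ∀ (_ : FiniteDimensional K V) (_ : Nontrivial V) (f : Fin m → Module.End K V),
      (∀ i j, Commute (f i) (f j)) →
      ∃ χ : Fin m → K, ∃ v : V, v ≠ 0 ∧ ∀ i, f i v = χ i • v := by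
  intro m
  induction m with
  | zero =>
    intro V _ _ _ _ f _
    obtain ⟨v, hv⟩ := exists_ne (0 : V)
    exact ⟨finZeroElim, v, hv, fun i => i.elim0⟩
  | succ m ih =>
    intro V _ _ _ _ f hf
    obtain ⟨c, hc⟩ := Module.End.exists_eigenvalue (f 0)
    obtain ⟨w, hw⟩ := hc.exists_hasEigenvector
    set E := Module.End.eigenspace (f 0) c with hEdef
    have hE : ∀ i, Set.MapsTo (f i) E E := fun i =>
      Module.End.mapsTo_genEigenspace_of_comm (hf 0 i) c 1
    haveI : Nontrivial E := by
      refine ⟨⟨⟨w, hw.1⟩, 0, ?_⟩⟩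
      simp only [ne_eq, Submodule.mk_eq_zero]
      exact hw.2
    obtain ⟨χ', v', hv'0, hfv'⟩ := ih E inferInstance inferInstance inferInstance inferInstance
      (fun i => (f i.succ).restrict (hE i.succ))
      (fun i j => LinearMap.restrict_commute (hf i.succ j.succ) _ _)
    refine ⟨Fin.cons c χ', (v' : V), by simpa using hv'0, ?_⟩
    intro i
    refine Fin.cases ?_ ?_ i
    · have hm : (f 0) ↑v' = c • (v' : V) := Module.End.mem_eigenspace_iff.mp v'.2
      simpa using hm
    · intro k
      have := congrArg Subtype.val (hfv' k)
      simp only [Fin.cons_succ]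
      exact this

private lemma multiset_univ_succ {α : Type*} {n : ℕ} (g : Fin (n + 1) → α) :
    (Finset.univ.val : Multiset (Fin (n + 1))).map g
      = g 0 ::ₘ (Finset.univ.val : Multiset (Fin n)).map (fun k => g k.succ) := by
  rw [Fin.univ_succ, Finset.cons_val, Multiset.map_cons, Finset.map_val, Multiset.map_map]
  rfl

end Aux

set_option synthInstance.maxHeartbeats 1000000 in
/-- For a pairwise commuting family of matrices over an algebraically closed field,
there is a simultaneous enumeration `μ` of the eigenvalues: for each `i`, the multiset
of roots of the characteristic polynomial of `M i` is `{μ k i : k}`, and the multiset of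
roots of the characteristic polynomial of `∏ i, M i` is `{∏ i, μ k i : k}`. -/
theorem eigenvalues_of_commuting_product
    (K : Type*) [Field K] [IsAlgClosed K] (n m : ℕ)
    (M : Fin m → Matrix (Fin n) (Fin n) K)
    (hcomm : ∀ i j, M i * M j = M j * M i) :
    ∃ μ : Fin n → Fin m → K,
      (∀ i : Fin m,
        (M i).charpoly.roots
          = (Finset.univ.val : Multiset (Fin n)).map (fun k => μ k i)) ∧
      (List.ofFn M).prod.charpoly.roots
        = (Finset.univ.val : Multiset (Fin n)).map (fun k => ∏ i, μ k i) := by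
  classical
  induction n with
  | zero =>
    refine ⟨fun k => k.elim0, fun i => ?_, ?_⟩ <;>
      simp [Matrix.charpoly, Matrix.det_isEmpty, Finset.univ_eq_empty]
  | succ n ih =>
    -- the commuting endomorphisms of `Fin (n+1) → K` given by the matrices
    set f : Fin m → Module.End K (Fin (n + 1) → K) :=
      fun i => Matrix.toLinAlgEquiv' (M i) with hfdef
    have hfc : ∀ i j, Commute (f i) (f j) := by
      intro i j
      unfold Commute SemiconjBy
      rw [hfdef]
      simp only [← map_mul, hcomm i j]
    -- a common eigenvector
    obtain ⟨χ, v, hv0, hveq⟩ :=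
      exists_common_eigenvector m (Fin (n + 1) → K) inferInstance inferInstance
        inferInstance inferInstance f hfc
    -- a basis whose first vector is `v`
    have hli : LinearIndepOn K id ({v} : Set (Fin (n + 1) → K)) :=
      LinearIndepOn.singleton hv0
    let b0 := Module.Basis.extend hli
    haveI : Fintype (hli.extend (Set.subset_univ ({v} : Set (Fin (n + 1) → K)))) :=
      FiniteDimensional.fintypeBasisIndex b0
    have hcard :
        Fintype.card (hli.extend (Set.subset_univ ({v} : Set (Fin (n + 1) → K)))) = n + 1 := by
      rw [← Module.finrank_eq_card_basis b0]
      simp [Module.finrank_pi]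
    have hvmem : v ∈ hli.extend (Set.subset_univ ({v} : Set (Fin (n + 1) → K))) :=
      hli.subset_extend _ rfl
    let e := Fintype.equivFinOfCardEq hcard
    let b : Module.Basis (Fin (n + 1)) K (Fin (n + 1) → K) :=
      b0.reindex (e.trans (Equiv.swap 0 (e ⟨v, hvmem⟩)))
    have hb0 : b 0 = v := by
      show b0.reindex (e.trans (Equiv.swap 0 (e ⟨v, hvmem⟩))) 0 = v
      rw [Module.Basis.reindex_apply, Equiv.symm_trans_apply, Equiv.symm_swap, Equiv.swap_apply_left, Equiv.symm_apply_apply]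
      exact Module.Basis.extend_apply_self hli _
    -- the conjugated matrices
    set N : Fin m → Matrix (Fin (n + 1)) (Fin (n + 1)) K :=
      fun i => LinearMap.toMatrixAlgEquiv b (f i) with hNdef
    have hN_eq : ∀ i, N i = LinearMap.toMatrix b b (f i) := by
      intro i
      ext k l
      show LinearMap.toMatrixAlgEquiv b (f i) k l = _
      rw [LinearMap.toMatrixAlgEquiv_apply, LinearMap.toMatrix_apply]
    have hcharN : ∀ i, (N i).charpoly = (M i).charpoly := by
      intro i
      rw [hN_eq, LinearMap.charpoly_toMatrix,
        ← LinearMap.charpoly_toMatrix (f i) (Pi.basisFun K (Fin (n + 1))),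
        LinearMap.toMatrix_eq_toMatrix']
      congr 1
      rw [hfdef]
      show LinearMap.toMatrix' (Matrix.toLin' (M i)) = M i
      exact LinearMap.toMatrix'_toLin' (M i)
    -- column structure of `N i`
    have hNcol : ∀ i, ∀ k : Fin (n + 1), N i k 0 = χ i * (if k = 0 then 1 else 0) := by
      intro i k
      show LinearMap.toMatrixAlgEquiv b (f i) k 0 = _
      rw [LinearMap.toMatrixAlgEquiv_apply, hb0, hveq i, map_smul, ← hb0, b.repr_self]
      simp [Finsupp.single_apply, eq_comm]
    have hN0 : ∀ i, ∀ k : Fin n, N i k.succ 0 = 0 := by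
      intro i k
      rw [hNcol i k.succ, if_neg (Fin.succ_ne_zero k), mul_zero]
    have hN00 : ∀ i, N i 0 0 = χ i := by
      intro i
      rw [hNcol i 0, if_pos rfl, mul_one]
    -- the lower-right blocks
    set D : Fin m → Matrix (Fin n) (Fin n) K :=
      fun i => (N i).submatrix Fin.succ Fin.succ with hDdef
    have hNcomm : ∀ i j, N i * N j = N j * N i := by
      intro i j
      rw [hN_eq i, hN_eq j, ← LinearMap.toMatrix_mul, ← LinearMap.toMatrix_mul]
      congr 1
      exact hfc i j
    have hDcomm : ∀ i j, D i * D j = D j * D i := by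
      intro i j
      show (N i).submatrix Fin.succ Fin.succ * (N j).submatrix Fin.succ Fin.succ
        = (N j).submatrix Fin.succ Fin.succ * (N i).submatrix Fin.succ Fin.succ
      rw [← (mul_succ_col (hN0 i) (hN0 j)).2.2, ← (mul_succ_col (hN0 j) (hN0 i)).2.2, hNcomm i j]
    obtain ⟨μ', hμ'1, hμ'2⟩ := ih D hDcomm
    refine ⟨Fin.cons χ μ', ?_, ?_⟩
    · intro i
      rw [← hcharN i, charpoly_succ_col (N i) (hN0 i), hN00 i,
        Polynomial.roots_mul (mul_ne_zero (Polynomial.X_sub_C_ne_zero (χ i))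
          (Matrix.charpoly_monic _).ne_zero),
        Polynomial.roots_X_sub_C]
      have hDi : (N i).submatrix Fin.succ Fin.succ = D i := rfl
      rw [hDi, hμ'1 i, multiset_univ_succ (fun k => (Fin.cons χ μ' : Fin (n + 1) → Fin m → K) k i)]
      simp only [Fin.cons_zero, Fin.cons_succ, Multiset.singleton_add]
    · -- the product
      have hprodN : (List.ofFn N).prod = LinearMap.toMatrix b b (Matrix.toLinAlgEquiv'
          ((List.ofFn M).prod)) := by
        have h1 : List.ofFn N
            = ((List.ofFn M).map ⇑(Matrix.toLinAlgEquiv' (R := K)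
                (n := Fin (n + 1)))).map ⇑(LinearMap.toMatrixAlgEquiv b) := by
          rw [List.map_map, List.map_ofFn]
          rfl
        rw [h1, ← map_list_prod (LinearMap.toMatrixAlgEquiv b),
          ← map_list_prod (Matrix.toLinAlgEquiv' (R := K) (n := Fin (n + 1)))]
        ext k l
        rw [LinearMap.toMatrixAlgEquiv_apply, LinearMap.toMatrix_apply]
      have hcharP : (List.ofFn N).prod.charpoly = (List.ofFn M).prod.charpoly := by
        rw [hprodN, LinearMap.charpoly_toMatrix,
          ← LinearMap.charpoly_toMatrix (Matrix.toLinAlgEquiv' ((List.ofFn M).prod))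
            (Pi.basisFun K (Fin (n + 1))),
          LinearMap.toMatrix_eq_toMatrix']
        congr 1
        exact LinearMap.toMatrix'_toLin' _
      have hmem : ∀ A ∈ List.ofFn N, ∀ k : Fin n, A k.succ 0 = 0 := by
        intro A hA k
        obtain ⟨i, rfl⟩ := List.mem_ofFn.mp hA
        exact hN0 i k
      obtain ⟨hP0, hP00, hPsub⟩ := list_prod_succ_col (List.ofFn N) hmem
      have hP00' : (List.ofFn N).prod 0 0 = ∏ i, χ i := by
        rw [hP00]
        rw [List.map_ofFn]
        rw [List.prod_ofFn]
        simp [hN00, Function.comp_def]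
      have hPsub' : (List.ofFn N).prod.submatrix Fin.succ Fin.succ = (List.ofFn D).prod := by
        rw [hPsub, List.map_ofFn]
        rfl
      rw [← hcharP, charpoly_succ_col _ hP0, hP00', hPsub',
        Polynomial.roots_mul (mul_ne_zero (Polynomial.X_sub_C_ne_zero _)
          (Matrix.charpoly_monic _).ne_zero),
        Polynomial.roots_X_sub_C, hμ'2,
        multiset_univ_succ (fun k => ∏ i, (Fin.cons χ μ' : Fin (n + 1) → Fin m → K) k i)]
      simp only [Fin.cons_zero, Fin.cons_succ, Multiset.singleton_add]
end

section
/- Let K be an algebraically closed field which is also a normed field (so the norm is multiplicative), let n and m be natural numbers, let s be a real number with 0 < s, and let M : Fin m → Matrix (Fin n) (Fin n) K be a family of matrices that pairwise commute. Assume: (1) for every i and every root λ of the characteristic polynomial of M i, one has ‖λ‖ ≤ 1; and (2) every root λ of the characteristic polynomial of the product ∏ i, M i satisfies s ≤ ‖λ‖. Then for every i, every root λ of the characteristic polynomial of M i satisfies s ≤ ‖λ‖. -/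
open Polynomial Matrix

section Helpers

variable {K : Type*} [Field K] {ι : Type*} [Fintype ι] [DecidableEq ι]

private lemma my_eval_charpoly (A : Matrix ι ι K) (μ : K) :
    A.charpoly.eval μ = (Matrix.scalar ι μ - A).det := by
  rw [Matrix.charpoly, eval_det, matPolyEquiv_charmatrix]
  simp

variable {V : Type*} [AddCommGroup V] [Module K V]

private lemma my_charpoly_eval [FiniteDimensional K V] (f : Module.End K V) (μ : K) :
    f.charpoly.eval μ = LinearMap.det (μ • (1 : Module.End K V) - f) := by
  classical
  set b := Module.Free.chooseBasis K V
  have hmx : ∀ φ : Module.End K V, LinearMap.toMatrixAlgEquiv b φ = LinearMap.toMatrix b b φ :=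
    fun _ => rfl
  rw [← LinearMap.charpoly_toMatrix f b, my_eval_charpoly, ← LinearMap.det_toMatrix b]
  congr 1
  rw [← hmx, ← hmx, map_sub]
  congr 1
  have h1 : (μ • (1 : Module.End K V)) = algebraMap K (Module.End K V) μ := by
    simp [Module.algebraMap_end_eq_smul_id, Module.End.one_eq_id]
  rw [h1, AlgEquiv.commutes]
  rfl

private lemma my_isUnit_of_det_ne_zero [FiniteDimensional K V] (φ : Module.End K V)
    (h : LinearMap.det φ ≠ 0) : IsUnit φ := by
  classical
  set b := Module.Free.chooseBasis K V
  have h1 : IsUnit (LinearMap.toMatrixAlgEquiv b φ) := by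
    show IsUnit (LinearMap.toMatrix b b φ)
    rw [Matrix.isUnit_iff_isUnit_det, LinearMap.det_toMatrix, isUnit_iff_ne_zero]
    exact h
  have h2 := h1.map (LinearMap.toMatrixAlgEquiv b).symm
  rwa [AlgEquiv.symm_apply_apply] at h2

private lemma my_eigenspace_eq_ker (f : Module.End K V) (μ : K) :
    f.eigenspace μ = LinearMap.ker (μ • (1 : Module.End K V) - f) := by
  ext x
  simp only [Module.End.mem_eigenspace_iff, LinearMap.mem_ker, LinearMap.sub_apply,
    LinearMap.smul_apply, Module.End.one_apply, sub_eq_zero]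
  exact eq_comm

private lemma my_hasEigenvalue_iff [FiniteDimensional K V] (f : Module.End K V) (μ : K) :
    f.HasEigenvalue μ ↔ f.charpoly.IsRoot μ := by
  rw [Module.End.hasEigenvalue_iff, Polynomial.IsRoot, my_charpoly_eval, my_eigenspace_eq_ker]
  constructor
  · intro h
    by_contra hdet
    exact h (LinearMap.isUnit_iff_ker_eq_bot _ |>.mp (my_isUnit_of_det_ne_zero _ hdet))
  · intro h
    exact (LinearMap.bot_lt_ker_of_det_eq_zero h).ne'

private lemma my_det_eq_prod_roots [IsAlgClosed K] [FiniteDimensional K V]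
    (f : Module.End K V) : LinearMap.det f = f.charpoly.roots.prod := by
  classical
  set b := Module.Free.chooseBasis K V
  rw [← LinearMap.det_toMatrix b, Matrix.det_eq_prod_roots_charpoly,
    LinearMap.charpoly_toMatrix]

private lemma my_card_roots [IsAlgClosed K] [FiniteDimensional K V] (f : Module.End K V) :
    f.charpoly.roots.card = Module.finrank K V := by
  rw [← LinearMap.charpoly_natDegree]
  exact (Polynomial.splits_iff_card_roots).mp (IsAlgClosed.splits _)

private lemma my_mapsTo_listProd (l : List (Module.End K V)) (E : Submodule K V)
    (h : ∀ φ ∈ l, Set.MapsTo φ E E) : Set.MapsTo (l.prod : Module.End K V) E E := by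
  induction l with
  | nil => simpa [Module.End.one_eq_id] using Set.mapsTo_id (E : Set V)
  | cons a t ih =>
    rw [List.prod_cons, Module.End.mul_eq_comp]
    rw [show ((a ∘ₗ t.prod : Module.End K V) : V → V) = a ∘ (t.prod : V → V) from rfl]
    exact (h a (List.mem_cons_self (a := a) (l := t))).comp (ih fun φ hφ => h φ (List.mem_cons_of_mem _ hφ))

private lemma my_restrict_ofFn_prod {E : Submodule K V} :
    ∀ (m : ℕ) (g : Fin m → Module.End K V) (h : ∀ j, Set.MapsTo (g j) E E)
      (hP : Set.MapsTo ((List.ofFn g).prod : Module.End K V) E E),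
    LinearMap.restrict (List.ofFn g).prod hP
      = (List.ofFn (fun j => LinearMap.restrict (g j) (h j))).prod := by
  intro m
  induction m with
  | zero =>
    intro g h hP
    ext x
    simp [LinearMap.restrict_apply]
  | succ k ih =>
    intro g h hP
    have htail : Set.MapsTo ((List.ofFn (fun j => g j.succ)).prod : Module.End K V) E E := by
      apply my_mapsTo_listProd
      intro φ hφ
      obtain ⟨j, rfl⟩ := List.mem_ofFn.mp hφ
      exact h _
    have hP' : Set.MapsTo ((g 0 ∘ₗ (List.ofFn (fun j => g j.succ)).prod : Module.End K V)) E E := by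
      rw [← Module.End.mul_eq_comp]
      rw [← List.prod_cons, ← List.ofFn_succ]
      exact hP
    have key : LinearMap.restrict (List.ofFn g).prod hP
        = LinearMap.restrict (g 0) (h 0) ∘ₗ
          LinearMap.restrict (List.ofFn (fun j => g j.succ)).prod htail := by
      rw [← LinearMap.restrict_comp htail (h 0) hP']
      congr 1
      rw [← Module.End.mul_eq_comp, ← List.prod_cons, ← List.ofFn_succ]
    rw [key, ih (fun j => g j.succ) (fun j => h _) htail, List.ofFn_succ, List.prod_cons,
      Module.End.mul_eq_comp]

end Helpers

section NormHelpers

variable {K : Type*} [NormedField K]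

private lemma my_norm_prod_le_one (t : Multiset K) (h : ∀ x ∈ t, ‖x‖ ≤ 1) : ‖t.prod‖ ≤ 1 := by
  induction t using Multiset.induction_on with
  | empty => simp
  | cons a t ih =>
    rw [Multiset.prod_cons, norm_mul]
    exact mul_le_one₀ (h a (Multiset.mem_cons_self a t)) (norm_nonneg _)
      (ih fun x hx => h x (Multiset.mem_cons_of_mem hx))

private lemma my_pow_card_le_norm_prod {s : ℝ} (hs : 0 ≤ s) (t : Multiset K)
    (h : ∀ x ∈ t, s ≤ ‖x‖) : s ^ t.card ≤ ‖t.prod‖ := by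
  induction t using Multiset.induction_on with
  | empty => simp
  | cons a t ih =>
    rw [Multiset.prod_cons, norm_mul, Multiset.card_cons, pow_succ, mul_comm (s ^ t.card) s]
    exact mul_le_mul (h a (Multiset.mem_cons_self a t))
      (ih fun x hx => h x (Multiset.mem_cons_of_mem hx)) (pow_nonneg hs _) (norm_nonneg _)

private lemma my_charpoly_toLinAlgEquiv' {n : ℕ} {K : Type*} [Field K]
    (A : Matrix (Fin n) (Fin n) K) :
    (Matrix.toLinAlgEquiv' A : Module.End K (Fin n → K)).charpoly = A.charpoly := by
  classical
  have h := LinearMap.charpoly_toMatrix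
    (Matrix.toLinAlgEquiv' A : Module.End K (Fin n → K)) (Pi.basisFun K (Fin n))
  rw [LinearMap.toMatrix_eq_toMatrix'] at h
  rw [← h]
  congr 1
  exact LinearMap.toMatrix'_toLin' A

end NormHelpers

/-- If pairwise commuting matrices over an algebraically closed normed field all have
eigenvalues of norm at most `1`, and every eigenvalue of their product has norm at
least `s`, then every eigenvalue of each factor has norm at least `s`. -/
theorem slopes_of_commuting_factors
    (K : Type*) [NormedField K] [IsAlgClosed K] (n m : ℕ) (s : ℝ) (hs : 0 < s)
    (M : Fin m → Matrix (Fin n) (Fin n) K)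
    (hcomm : ∀ i j, M i * M j = M j * M i)
    (hle : ∀ i : Fin m, ∀ lam ∈ (M i).charpoly.roots, ‖lam‖ ≤ 1)
    (hprod : ∀ lam ∈ (List.ofFn M).prod.charpoly.roots, s ≤ ‖lam‖) :
    ∀ i : Fin m, ∀ lam ∈ (M i).charpoly.roots, s ≤ ‖lam‖ := by
  classical
  intro i lam hlam
  set f : Fin m → Module.End K (Fin n → K) := fun j => Matrix.toLinAlgEquiv' (M j) with hf
  have hchar : ∀ j, (f j).charpoly = (M j).charpoly := fun j => my_charpoly_toLinAlgEquiv' (M j)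
  -- lam is an eigenvalue of f i
  have hEig : (f i).HasEigenvalue lam := by
    rw [my_hasEigenvalue_iff, hchar]
    exact Polynomial.isRoot_of_mem_roots hlam
  set E := (f i).maxGenEigenspace lam with hE
  have hle' : (f i).eigenspace lam ≤ E := ((f i).genEigenspace lam).monotone le_top
  have hEbot : E ≠ ⊥ := by
    intro hbot
    rw [Module.End.hasEigenvalue_iff] at hEig
    exact hEig (le_bot_iff.mp (hbot ▸ hle'))
  haveI : Nontrivial ↥E := Submodule.nontrivial_iff_ne_bot.mpr hEbot
  set d := Module.finrank K ↥E with hdd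
  have hd : 0 < d := Module.finrank_pos
  have hcommf : ∀ j, Commute (f i) (f j) := by
    intro j
    rw [Commute, SemiconjBy, hf]
    simp only [← _root_.map_mul, hcomm]
  have hmap : ∀ j, Set.MapsTo (f j) E E := fun j =>
    Module.End.mapsTo_maxGenEigenspace_of_comm (hcommf j) lam
  set g : Fin m → Module.End K ↥E := fun j => LinearMap.restrict (f j) (hmap j) with hg
  have hgj : ∀ j, ∀ μ ∈ (g j).charpoly.roots,
      ∃ v : ↥E, v ≠ 0 ∧ f j ↑v = μ • (↑v : Fin n → K) := by
    intro j μ hμ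
    have hev : (g j).HasEigenvalue μ :=
      (my_hasEigenvalue_iff _ _).mpr (Polynomial.isRoot_of_mem_roots hμ)
    obtain ⟨v, hv⟩ := hev.exists_hasEigenvector
    refine ⟨v, (Module.End.hasEigenvector_iff.mp hv).2, ?_⟩
    have h2 : ((g j v : ↥E) : Fin n → K) = μ • (v : Fin n → K) := by
      rw [hv.apply_eq_smul]; rfl
    rw [← h2, hg]
    rfl
  have hvne : ∀ v : ↥E, v ≠ 0 → ((v : Fin n → K) ≠ 0) := by
    intro v hv0 hc
    exact hv0 (Subtype.ext hc)
  have hμ_norm : ∀ j, ∀ μ ∈ (g j).charpoly.roots, ‖μ‖ ≤ 1 := by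
    intro j μ hμ
    obtain ⟨v, hv0, hv⟩ := hgj j μ hμ
    apply hle j
    rw [Polynomial.mem_roots']
    refine ⟨(M j).charpoly_monic.ne_zero, ?_⟩
    rw [← hchar j]
    apply (my_hasEigenvalue_iff _ _).mp
    exact Module.End.hasEigenvalue_of_hasEigenvector
      (Module.End.hasEigenvector_iff.mpr
        ⟨Module.End.mem_eigenspace_iff.mpr hv, hvne v hv0⟩)
  have hμ_lam : ∀ μ ∈ (g i).charpoly.roots, μ = lam := by
    intro μ hμ
    obtain ⟨v, hv0, hv⟩ := hgj i μ hμ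
    have hvE : (v : Fin n → K) ∈ (f i).maxGenEigenspace lam := v.2
    rw [Module.End.mem_maxGenEigenspace] at hvE
    obtain ⟨k, hk⟩ := hvE
    have hpow : ∀ k : ℕ,
        ((f i - lam • 1) ^ k) (v : Fin n → K) = (μ - lam) ^ k • (v : Fin n → K) := by
      intro k
      induction k with
      | zero => simp
      | succ k ihk =>
        have h1 : (f i - lam • (1 : Module.End K (Fin n → K))) (v : Fin n → K)
            = (μ - lam) • (v : Fin n → K) := by
          simp [LinearMap.sub_apply, hv, sub_smul]
        rw [pow_succ, Module.End.mul_apply, h1, LinearMap.map_smul, ihk, smul_smul, ← pow_succ']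
    have h0 : (μ - lam) ^ k • (v : Fin n → K) = 0 := by rw [← hpow k, hk]
    have hsub : (μ - lam) ^ k = 0 := (smul_eq_zero.mp h0).resolve_right (hvne v hv0)
    have hk0 : k ≠ 0 := by
      intro hc
      rw [hc, pow_zero] at hsub
      exact one_ne_zero hsub
    have := pow_eq_zero_iff hk0 |>.mp hsub
    exact sub_eq_zero.mp this
  set U : Module.End K (Fin n → K) := (List.ofFn f).prod with hU
  have hUmap : Set.MapsTo U E E := by
    apply my_mapsTo_listProd
    intro ψ hψ
    obtain ⟨j, rfl⟩ := List.mem_ofFn.mp hψ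
    exact hmap j
  set gU : Module.End K ↥E := LinearMap.restrict U hUmap with hgUdef
  have hgU : gU = (List.ofFn g).prod := my_restrict_ofFn_prod m f hmap hUmap
  have hUchar : U.charpoly = (List.ofFn M).prod.charpoly := by
    have heq : U = Matrix.toLinAlgEquiv' ((List.ofFn M).prod) := by
      rw [hU, hf, map_list_prod, List.map_ofFn]
      rfl
    rw [heq, my_charpoly_toLinAlgEquiv']
  have hge : ∀ μ ∈ gU.charpoly.roots, s ≤ ‖μ‖ := by
    intro μ hμ
    have hev : Module.End.HasEigenvalue gU μ :=
      (my_hasEigenvalue_iff _ _).mpr (Polynomial.isRoot_of_mem_roots hμ)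
    obtain ⟨v, hv⟩ := hev.exists_hasEigenvector
    have h2 : U ↑v = μ • ((v : Fin n → K)) := by
      have h3 : ((gU v : ↥E) : Fin n → K) = μ • (v : Fin n → K) := by
        rw [hv.apply_eq_smul]; rfl
      rw [← h3, hgUdef]
      rfl
    apply hprod
    rw [Polynomial.mem_roots']
    refine ⟨(List.ofFn M).prod.charpoly_monic.ne_zero, ?_⟩
    rw [← hUchar]
    apply (my_hasEigenvalue_iff _ _).mp
    exact Module.End.hasEigenvalue_of_hasEigenvector
      (Module.End.hasEigenvector_iff.mpr
        ⟨Module.End.mem_eigenspace_iff.mpr h2,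
         hvne v (Module.End.hasEigenvector_iff.mp hv).2⟩)
  have hdetgU_ge : s ^ d ≤ ‖LinearMap.det gU‖ := by
    rw [my_det_eq_prod_roots]
    have hc : gU.charpoly.roots.card = d := my_card_roots gU
    calc s ^ d = s ^ gU.charpoly.roots.card := by rw [hc]
    _ ≤ ‖gU.charpoly.roots.prod‖ := my_pow_card_le_norm_prod hs.le _ hge
  have hdet_le : ∀ j, ‖LinearMap.det (g j)‖ ≤ 1 := by
    intro j
    rw [my_det_eq_prod_roots]
    exact my_norm_prod_le_one _ (hμ_norm j)
  have hdeti : ‖LinearMap.det (g i)‖ = ‖lam‖ ^ d := by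
    rw [my_det_eq_prod_roots]
    have hrep : (g i).charpoly.roots = Multiset.replicate d lam := by
      rw [Multiset.eq_replicate]
      exact ⟨my_card_roots _, hμ_lam⟩
    rw [hrep, Multiset.prod_replicate, norm_pow]
  have hdetgU_le : ‖LinearMap.det gU‖ ≤ ‖lam‖ ^ d := by
    rw [hgU, map_list_prod, List.map_ofFn, List.prod_ofFn, norm_prod]
    calc (∏ j, ‖LinearMap.det (g j)‖)
        = ‖LinearMap.det (g i)‖ * ∏ j ∈ Finset.univ.erase i, ‖LinearMap.det (g j)‖ :=
          (Finset.mul_prod_erase _ _ (Finset.mem_univ i)).symm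
      _ ≤ ‖lam‖ ^ d * 1 := by
          apply mul_le_mul (le_of_eq hdeti)
            (Finset.prod_le_one (fun j _ => norm_nonneg _) (fun j _ => hdet_le j))
            (Finset.prod_nonneg (fun j _ => norm_nonneg _))
            (by positivity)
      _ = ‖lam‖ ^ d := mul_one _
  have hfinal : s ^ d ≤ ‖lam‖ ^ d := le_trans hdetgU_ge hdetgU_le
  exact (pow_le_pow_iff_left₀ hs.le (norm_nonneg _) hd.ne').mp hfinal
end

section
/- (Bol's identity.) Let a, b, c, d ∈ ℂ with a·d − b·c ≠ 0, let k ≥ 2 be a natural number, let f : ℂ → ℂ be differentiable on all of ℂ (entire), and let z ∈ ℂ with c·z + d ≠ 0. Then the (k−1)-st iterated derivative at z of the function w ↦ (c·w + d)^(k−2) · f((a·w + b)/(c·w + d)) equals (a·d − b·c)^(k−1) · (c·z + d)^(−k) · (iteratedDeriv (k−1) f)((a·z + b)/(c·z + d)). -/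
open Topology Filter

namespace BolAux


lemma analyticAt_deriv {f : ℂ → ℂ} {x : ℂ} (h : AnalyticAt ℂ f x) :
    AnalyticAt ℂ (deriv f) x := by
  obtain ⟨s, hsub, hso, hxs⟩ := mem_nhds_iff.mp h.eventually_analyticAt
  exact (AnalyticOnNhd.deriv (fun y hy => hsub hy)) x hxs

lemma iteratedDeriv_const_mul' (n : ℕ) (K : ℂ) (f : ℂ → ℂ) (x : ℂ) :
    iteratedDeriv n (fun z => K * f z) x = K * iteratedDeriv n f x := by
  induction n generalizing f x with
  | zero => simp
  | succ n ih =>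
    rw [iteratedDeriv_succ', iteratedDeriv_succ',
      show deriv (fun z => K * f z) = fun z => K * deriv f z from deriv_const_mul_field' K]
    exact ih _ _

lemma iteratedDeriv_const'' (n : ℕ) (K : ℂ) (x : ℂ) :
    iteratedDeriv n (fun _ => K) x = if n = 0 then K else 0 := by
  induction n generalizing K x with
  | zero => simp
  | succ n ih =>
    rw [iteratedDeriv_succ', deriv_const']
    simp [ih]

lemma iteratedDeriv_add_analytic {f g : ℂ → ℂ} {x : ℂ} (hf : AnalyticAt ℂ f x)
    (hg : AnalyticAt ℂ g x) (n : ℕ) :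
    iteratedDeriv n (fun z => f z + g z) x = iteratedDeriv n f x + iteratedDeriv n g x := by
  induction n generalizing f g with
  | zero => simp
  | succ n ih =>
    rw [iteratedDeriv_succ', iteratedDeriv_succ', iteratedDeriv_succ']
    have h1 : deriv (fun z => f z + g z) =ᶠ[𝓝 x] fun z => deriv f z + deriv g z := by
      filter_upwards [hf.eventually_analyticAt, hg.eventually_analyticAt] with y hfy hgy
      exact deriv_add hfy.differentiableAt hgy.differentiableAt
    rw [h1.iteratedDeriv_eq n]
    exact ih (analyticAt_deriv hf) (analyticAt_deriv hg)

lemma iteratedDeriv_finset_sum {ι : Type*} (s : Finset ι) {F : ι → ℂ → ℂ} {x : ℂ}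
    (hF : ∀ i ∈ s, AnalyticAt ℂ (F i) x) (n : ℕ) :
    iteratedDeriv n (fun z => ∑ i ∈ s, F i z) x = ∑ i ∈ s, iteratedDeriv n (F i) x := by
  classical
  induction s using Finset.induction_on with
  | empty => simp [iteratedDeriv_const'']
  | insert i s hnotmem ih =>
    simp only [Finset.sum_insert hnotmem]
    rw [iteratedDeriv_add_analytic (hF i (Finset.mem_insert_self i s))
      (Finset.analyticAt_fun_sum _ (fun j hj => hF j (Finset.mem_insert_of_mem hj))) n,
      ih (fun j hj => hF j (Finset.mem_insert_of_mem hj))]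

lemma iteratedDeriv_affine_pow_zero (c d : ℂ) (e : ℕ) (x : ℂ) :
    iteratedDeriv (e + 1) (fun z : ℂ => (c * z + d) ^ e) x = 0 := by
  induction e generalizing x with
  | zero => simp [iteratedDeriv_succ]
  | succ e ih =>
    rw [iteratedDeriv_succ']
    have hder : deriv (fun z : ℂ => (c * z + d) ^ (e + 1))
        = fun z => ((e : ℂ) + 1) * c * (c * z + d) ^ e := by
      funext y
      have h1 : HasDerivAt (fun z : ℂ => c * z + d) c y := by
        simpa using ((hasDerivAt_id y).const_mul c).add_const d
      have h2 := h1.pow (e + 1)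
      rw [HasDerivAt.deriv (f := fun z : ℂ => (c * z + d) ^ (e + 1)) h2]
      push_cast
      ring
    rw [hder, iteratedDeriv_const_mul', ih, mul_zero]



lemma descFac_rec (n m : ℕ) :
    ((n + 1).descFactorial (m + 1) : ℂ)
      = (m + 1) * n.descFactorial m + n.descFactorial (m + 1) := by
  rw [Nat.succ_descFactorial_succ, Nat.descFactorial_succ]
  rcases le_or_gt m n with h | h
  · have : (n : ℂ) - m + (m + 1) = n + 1 := by ring
    push_cast [h]
    ring
  · have h0 : n.descFactorial m = 0 := Nat.descFactorial_eq_zero_iff_lt.mpr h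
    simp [h0]

lemma iteratedDeriv_pow_mul (n : ℕ) :
    ∀ (m : ℕ) (v : ℂ → ℂ) (z0 : ℂ), AnalyticAt ℂ v z0 →
      iteratedDeriv n (fun z => (z - z0) ^ m * v z) z0 =
        if m ≤ n then (n.descFactorial m : ℂ) * iteratedDeriv (n - m) v z0 else 0 := by
  induction n with
  | zero =>
    intro m v z0 hv
    cases m with
    | zero => simp
    | succ m => simp
  | succ n ih =>
    intro m v z0 hv
    cases m with
    | zero => simp only [pow_zero, one_mul, Nat.zero_le, if_true, Nat.descFactorial_zero,
        Nat.cast_one, Nat.sub_zero, one_mul]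
    | succ m =>
      rw [iteratedDeriv_succ']
      have hd : deriv (fun z => (z - z0) ^ (m + 1) * v z) =ᶠ[𝓝 z0]
          fun z => ((m : ℂ) + 1) * ((z - z0) ^ m * v z) + (z - z0) ^ (m + 1) * deriv v z := by
        filter_upwards [hv.eventually_analyticAt] with y hy
        have h1 : HasDerivAt (fun z : ℂ => (z - z0) ^ (m + 1))
            (((m : ℂ) + 1) * (y - z0) ^ m) y := by
          have h0 := ((hasDerivAt_id y).sub_const z0).pow (m + 1)
          simp only [id_eq, Nat.add_sub_cancel, Nat.cast_add, Nat.cast_one, mul_one] at h0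
          exact h0
        have h2 := h1.mul hy.differentiableAt.hasDerivAt
        rw [HasDerivAt.deriv (f := fun z => (z - z0) ^ (m + 1) * v z) h2]
        push_cast
        ring
      have A1 : AnalyticAt ℂ (fun z : ℂ => ((m : ℂ) + 1) * ((z - z0) ^ m * v z)) z0 := by
        exact analyticAt_const.mul (((analyticAt_id.sub analyticAt_const).pow m).mul hv)
      have A2 : AnalyticAt ℂ (fun z : ℂ => (z - z0) ^ (m + 1) * deriv v z) z0 := by
        exact ((analyticAt_id.sub analyticAt_const).pow (m + 1)).mul (analyticAt_deriv hv)
      rw [hd.iteratedDeriv_eq n, iteratedDeriv_add_analytic A1 A2 n,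
        iteratedDeriv_const_mul', ih m v z0 hv, ih (m + 1) (deriv v) z0 (analyticAt_deriv hv)]
      rcases le_or_gt (m + 1) (n + 1) with h | h
      · have hmn : m ≤ n := by omega
        rw [if_pos h, if_pos hmn]
        rcases le_or_gt (m + 1) n with h2 | h2
        · rw [if_pos h2]
          have he : n - (m + 1) + 1 = n - m := by omega
          have : iteratedDeriv (n - (m + 1)) (deriv v) z0 = iteratedDeriv (n - m) v z0 := by
            rw [← iteratedDeriv_succ', he]
          rw [this, descFac_rec]
          have he2 : n + 1 - (m + 1) = n - m := by omega
          rw [he2]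
          ring
        · have hm : m = n := by omega
          subst hm
          rw [if_neg (by omega)]
          rw [descFac_rec]
          have h0 : (m.descFactorial (m + 1) : ℂ) = 0 := by
            simp [Nat.descFactorial_eq_zero_iff_lt.mpr (Nat.lt_succ_self m)]
          rw [h0]
          simp
          ring
      · rw [if_neg (by omega), if_neg (by omega), if_neg (by omega)]
        simp

lemma iteratedDeriv_centered_pow (j m : ℕ) (w0 : ℂ) :
    iteratedDeriv j (fun w => (w - w0) ^ m) w0 = if m = j then (j.factorial : ℂ) else 0 := by
  have h := iteratedDeriv_pow_mul j m (fun _ => (1 : ℂ)) w0 analyticAt_const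
  simp only [mul_one] at h
  rw [h, iteratedDeriv_const'']
  rcases eq_or_ne m j with rfl | hmj
  · simp [Nat.descFactorial_self]
  · rcases le_or_gt m j with hle | hlt
    · have : ¬ (j - m = 0) := by omega
      simp [hle, this, hmj]
    · simp [Nat.not_le.mpr hlt, hmj]

lemma iteratedDeriv_mul_comp_eq_zero (φ : ℂ → ℂ) {z0 : ℂ} (hφ : AnalyticAt ℂ φ z0) :
    ∀ (n : ℕ) (u g : ℂ → ℂ), AnalyticAt ℂ u z0 → Differentiable ℂ g →
      (∀ j ≤ n, iteratedDeriv j g (φ z0) = 0) →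
      iteratedDeriv n (fun z => u z * g (φ z)) z0 = 0 := by
  intro n
  induction n with
  | zero =>
    intro u g hu hg hjet
    have := hjet 0 le_rfl
    simp only [iteratedDeriv_zero] at this ⊢
    simp [this]
  | succ n ih =>
    intro u g hu hg hjet
    have hgan : ∀ y : ℂ, AnalyticAt ℂ g y := fun y => hg.analyticAt y
    have hgd : Differentiable ℂ (deriv g) :=
      fun y => (analyticAt_deriv (hgan y)).differentiableAt
    rw [iteratedDeriv_succ']
    have hd : deriv (fun z => u z * g (φ z)) =ᶠ[𝓝 z0]
        fun z => deriv u z * g (φ z) + (u z * deriv φ z) * deriv g (φ z) := by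
      filter_upwards [hu.eventually_analyticAt, hφ.eventually_analyticAt] with y huy hφy
      have h1 : HasDerivAt (fun z => g (φ z)) (deriv g (φ y) * deriv φ y) y :=
        (hg (φ y)).hasDerivAt.comp y hφy.differentiableAt.hasDerivAt
      have h2 := huy.differentiableAt.hasDerivAt.mul h1
      rw [HasDerivAt.deriv (f := fun z => u z * g (φ z)) h2]
      ring
    have B1 : AnalyticAt ℂ (fun z : ℂ => deriv u z * g (φ z)) z0 := by
      exact (analyticAt_deriv hu).mul ((hgan (φ z0)).comp hφ)
    have B2 : AnalyticAt ℂ (fun z : ℂ => (u z * deriv φ z) * deriv g (φ z)) z0 := by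
      exact (hu.mul (analyticAt_deriv hφ)).mul ((analyticAt_deriv (hgan (φ z0))).comp hφ)
    rw [hd.iteratedDeriv_eq n, iteratedDeriv_add_analytic B1 B2 n,
      ih (deriv u) g (analyticAt_deriv hu) hg (fun j hj => hjet j (by omega)),
      ih (fun z => u z * deriv φ z) (deriv g) (hu.mul (analyticAt_deriv hφ)) hgd
        (fun j hj => by rw [← iteratedDeriv_succ']; exact hjet (j + 1) (by omega))]
    simp


lemma bol_aux (a b c d : ℂ) (hdet : a * d - b * c ≠ 0) (q : ℕ)
    (f : ℂ → ℂ) (hf : Differentiable ℂ f) (z : ℂ) (hz : c * z + d ≠ 0) :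
    iteratedDeriv (q + 1) (fun w => (c * w + d) ^ q * f ((a * w + b) / (c * w + d))) z
      = (a * d - b * c) ^ (q + 1) * ((c * z + d)⁻¹) ^ (q + 2) *
          iteratedDeriv (q + 1) f ((a * z + b) / (c * z + d)) := by
  set w0 : ℂ := (a * z + b) / (c * z + d) with hw0
  set cm : ℕ → ℂ := fun m => iteratedDeriv m f w0 / m.factorial with hcm
  set P : ℂ → ℂ := fun w => ∑ m ∈ Finset.range (q + 2), cm m * (w - w0) ^ m with hP
  set g : ℂ → ℂ := fun w => f w + (-1) * P w with hgdef
  have hopen : IsOpen {w : ℂ | c * w + d ≠ 0} := by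
    have : {w : ℂ | c * w + d ≠ 0} = (fun w : ℂ => c * w + d) ⁻¹' {0}ᶜ := rfl
    rw [this]
    exact (isOpen_compl_singleton).preimage (by continuity)
  have hden : AnalyticAt ℂ (fun w : ℂ => c * w + d) z := by
    exact (analyticAt_const.mul analyticAt_id).add analyticAt_const
  have hnum : AnalyticAt ℂ (fun w : ℂ => a * w + b) z := by
    exact (analyticAt_const.mul analyticAt_id).add analyticAt_const
  have hφ : AnalyticAt ℂ (fun w : ℂ => (a * w + b) / (c * w + d)) z := hnum.div hden hz
  have hu : AnalyticAt ℂ (fun w : ℂ => (c * w + d) ^ q) z := hden.pow q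
  have hPan : ∀ y : ℂ, AnalyticAt ℂ P y := by
    intro y
    rw [hP]
    exact Finset.analyticAt_fun_sum _
      (fun m _ => analyticAt_const.mul ((analyticAt_id.sub analyticAt_const).pow m))
  have hgd : Differentiable ℂ g := by
    rw [hgdef]
    exact hf.add (Differentiable.const_mul (fun y => (hPan y).differentiableAt) _)
  -- jets of g vanish at w0 up to order q+1
  have hjet : ∀ j ≤ q + 1, iteratedDeriv j g w0 = 0 := by
    intro j hj
    have h1 : iteratedDeriv j g w0
        = iteratedDeriv j f w0 + (-1) * iteratedDeriv j P w0 := by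
      rw [hgdef, iteratedDeriv_add_analytic (g := fun w => (-1 : ℂ) * P w) (hf.analyticAt w0)
        (analyticAt_const.mul (hPan w0)) j, iteratedDeriv_const_mul']
    have h2 : iteratedDeriv j P w0 = iteratedDeriv j f w0 := by
      have hsum1 : ∀ m ∈ Finset.range (q + 2),
          AnalyticAt ℂ (fun w : ℂ => cm m * (w - w0) ^ m) w0 := fun m _ => by
        exact analyticAt_const.mul ((analyticAt_id.sub analyticAt_const).pow m)
      rw [hP, iteratedDeriv_finset_sum (Finset.range (q + 2)) hsum1 j]
      have hterm : ∀ m ∈ Finset.range (q + 2),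
          iteratedDeriv j (fun w => cm m * (w - w0) ^ m) w0
            = if m = j then cm j * (j.factorial : ℂ) else 0 := by
        intro m _
        rw [iteratedDeriv_const_mul', iteratedDeriv_centered_pow]
        rcases eq_or_ne m j with rfl | hne
        · simp
        · simp [hne]
      rw [Finset.sum_congr rfl hterm, Finset.sum_ite_eq' (Finset.range (q + 2)) j
        (fun _ => cm j * (j.factorial : ℂ))]
      rw [if_pos (Finset.mem_range.mpr (by omega))]
      show iteratedDeriv j f w0 / (j.factorial : ℂ) * (j.factorial : ℂ) = _
      exact div_mul_cancel₀ _ (by exact_mod_cast Nat.factorial_ne_zero j)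
    rw [h1, h2]
    ring
  -- split the function
  have hsplit : (fun w => (c * w + d) ^ q * f ((a * w + b) / (c * w + d)))
      = fun w => (c * w + d) ^ q * g ((a * w + b) / (c * w + d))
          + ∑ m ∈ Finset.range (q + 2),
              cm m * ((c * w + d) ^ q * ((a * w + b) / (c * w + d) - w0) ^ m) := by
    funext w
    have hfg : f ((a * w + b) / (c * w + d))
        = g ((a * w + b) / (c * w + d)) + P ((a * w + b) / (c * w + d)) := by
      rw [hgdef]
      ring
    rw [hfg, hP]
    simp only []
    rw [mul_add, Finset.mul_sum]
    congr 1
    exact Finset.sum_congr rfl fun m _ => by ring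
  rw [hsplit]
  have Ag : AnalyticAt ℂ (fun w => (c * w + d) ^ q * g ((a * w + b) / (c * w + d))) z := by
    exact hu.mul ((hgd.analyticAt _).comp hφ)
  have Asum : AnalyticAt ℂ (fun w => ∑ m ∈ Finset.range (q + 2),
      cm m * ((c * w + d) ^ q * ((a * w + b) / (c * w + d) - w0) ^ m)) z := by
    exact Finset.analyticAt_fun_sum _
      (fun m _ => analyticAt_const.mul (hu.mul ((hφ.sub analyticAt_const).pow m)))
  rw [iteratedDeriv_add_analytic Ag Asum (q + 1)]
  rw [iteratedDeriv_mul_comp_eq_zero _ hφ (q + 1) _ g hu hgd hjet]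
  have hsum2 : ∀ m ∈ Finset.range (q + 2), AnalyticAt ℂ
      (fun w : ℂ => cm m * ((c * w + d) ^ q * ((a * w + b) / (c * w + d) - w0) ^ m)) z :=
    fun m _ => by
      exact analyticAt_const.mul (hu.mul ((hφ.sub analyticAt_const).pow m))
  rw [iteratedDeriv_finset_sum (Finset.range (q + 2)) hsum2 (q + 1)]
  have hterm : ∀ m ∈ Finset.range (q + 2),
      iteratedDeriv (q + 1)
          (fun w => cm m * ((c * w + d) ^ q * ((a * w + b) / (c * w + d) - w0) ^ m)) z
        = if m = q + 1 then (a * d - b * c) ^ (q + 1) * ((c * z + d)⁻¹) ^ (q + 2) *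
            iteratedDeriv (q + 1) f w0 else 0 := by
    intro m hm
    have hmle : m ≤ q + 1 := by
      have := Finset.mem_range.mp hm
      omega
    rw [iteratedDeriv_const_mul']
    have hev : (fun w => (c * w + d) ^ q * ((a * w + b) / (c * w + d) - w0) ^ m) =ᶠ[𝓝 z]
        fun w => (w - z) ^ m * ((a * d - b * c) ^ m * ((c * z + d)⁻¹) ^ m *
          ((c * w + d) ^ q * ((c * w + d)⁻¹) ^ m)) := by
      filter_upwards [hopen.mem_nhds hz] with w hw
      have key : (a * w + b) / (c * w + d) - w0
          = (a * d - b * c) * (w - z) * ((c * w + d)⁻¹ * (c * z + d)⁻¹) := by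
        rw [hw0]
        rw [div_sub_div _ _ hw hz, div_eq_mul_inv, mul_inv]
        ring
      rw [key, mul_pow, mul_pow, mul_pow]
      ring
    rw [hev.iteratedDeriv_eq (q + 1)]
    have hvan : AnalyticAt ℂ (fun w => (a * d - b * c) ^ m * ((c * z + d)⁻¹) ^ m *
        ((c * w + d) ^ q * ((c * w + d)⁻¹) ^ m)) z := by
      exact analyticAt_const.mul ((hden.pow q).mul ((hden.inv hz).pow m))
    rw [iteratedDeriv_pow_mul (q + 1) m _ z hvan, if_pos hmle]
    rcases eq_or_ne m (q + 1) with rfl | hne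
    · rw [if_pos rfl, Nat.sub_self, iteratedDeriv_zero, Nat.descFactorial_self]
      rw [hcm]
      have hfac : (((q + 1).factorial : ℕ) : ℂ) ≠ 0 := by
        exact_mod_cast Nat.cast_ne_zero.mpr (Nat.factorial_ne_zero (q + 1))
      field_simp
      have hs : (c * z + d)⁻¹ ^ q * (c * z + d) ^ q = 1 := by
        rw [← mul_pow, inv_mul_cancel₀ hz, one_pow]
      linear_combination (iteratedDeriv (q + 1) f w0 * (c * z + d)⁻¹ ^ 2 * (c * z + d)⁻¹ ^ q) * hs
    · rw [if_neg hne]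
      have hmq : m ≤ q := by omega
      rw [iteratedDeriv_const_mul']
      have hev2 : (fun w => (c * w + d) ^ q * ((c * w + d)⁻¹) ^ m) =ᶠ[𝓝 z]
          fun w => (c * w + d) ^ (q - m) := by
        filter_upwards [hopen.mem_nhds hz] with w hw
        rw [inv_pow]
        exact (pow_sub₀ _ hw hmq).symm
      rw [hev2.iteratedDeriv_eq]
      have hqm : q + 1 - m = (q - m) + 1 := by omega
      rw [hqm, iteratedDeriv_affine_pow_zero]
      simp
  rw [Finset.sum_congr rfl hterm, Finset.sum_ite_eq' (Finset.range (q + 2)) (q + 1) _]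
  rw [if_pos (Finset.mem_range.mpr (by omega))]
  simp


end BolAux

open BolAux in
/-- **Bol's identity.** Differentiating `k-1` times intertwines the weight-`k` slash
action and the weight-`(2-k)` slash action: for an entire `f` and `ad - bc ≠ 0`,
`∂^{k-1}_z [(cz+d)^{k-2} f((az+b)/(cz+d))]
  = (ad-bc)^{k-1} (cz+d)^{-k} (∂^{k-1} f)((az+b)/(cz+d))`. -/
theorem bol_identity
    (a b c d : ℂ) (hdet : a * d - b * c ≠ 0) (k : ℕ) (hk : 2 ≤ k)
    (f : ℂ → ℂ) (hf : Differentiable ℂ f)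
    (z : ℂ) (hz : c * z + d ≠ 0) :
    iteratedDeriv (k - 1)
        (fun w => (c * w + d) ^ (k - 2) * f ((a * w + b) / (c * w + d))) z
      = (a * d - b * c) ^ (k - 1) * (c * z + d) ^ (-(k : ℤ)) *
          iteratedDeriv (k - 1) f ((a * z + b) / (c * z + d)) := by
  obtain ⟨q, rfl⟩ := Nat.exists_eq_add_of_le hk
  rw [show 2 + q - 1 = q + 1 from by omega, show 2 + q - 2 = q from by omega]
  rw [bol_aux a b c d hdet q f hf z hz]
  have hzpow : (c * z + d) ^ (-((2 + q : ℕ) : ℤ)) = ((c * z + d)⁻¹) ^ (q + 2) := by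
    rw [zpow_neg, zpow_natCast, inv_pow, Nat.add_comm 2 q]
  rw [hzpow]
end
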